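/- Let M ≥ 1, let θ ∈ ℂ be a primitive M-th root of unity, and let u : ℤ × ℤ → ℂ satisfy (u_{n+1,m+1}+1)(u_{n,m+1}-1) = θ (u_{n+1,m}+1)(u_{n,m}-1) for all n,m ∈ ℤ, with u_{n,m} ≠ -1 and u_{n,m} ≠ 1 for all n,m. Define v_{n,m} = θ (u_{n,m}+1)/(u_{n,m+1}+1). Then: (i) v_{n+1,m} = (u_{n,m+1}-1)/(u_{n,m}-1) for all n,m ∈ ℤ; and (ii) provided v_{n+1,m} v_{n,m} ≠ θ and v_{n+1,m} ≠ 0 and v_{n,m+1} ≠ 0 for all n,m, v satisfies the modified equation (v_{n+1,m+1}-1)(v_{n,m}-θ) = θ (1 - v_{n+1,m}^{-1})(1 - θ v_{n,m+1}^{-1}) for all n,m ∈ ℤ. -/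
import Mathlib


/-- The non-point transformation `v_{n,m} = θ(u_{n,m}+1)/(u_{n,m+1}+1)`
of a solution `u` of the lattice equation satisfies
(i) `v_{n+1,m} = (u_{n,m+1}-1)/(u_{n,m}-1)`, and
(ii) under the nondegeneracy assumptions `v_{n+1,m}v_{n,m} ≠ θ`, `v_{n+1,m} ≠ 0`,
`v_{n,m+1} ≠ 0`, `v` solves the modified equation
`(v_{n+1,m+1}-1)(v_{n,m}-θ) = θ(1-v_{n+1,m}⁻¹)(1-θv_{n,m+1}⁻¹)`. -/
theorem stmt_13 (M : ℕ) (hM : 1 ≤ M) (θ : ℂ) (hθM : θ ^ M = 1)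
    (hθprim : ∀ j : ℕ, 1 ≤ j → j ≤ M - 1 → θ ^ j ≠ 1)
    (u : ℤ → ℤ → ℂ)
    (heq : ∀ n m : ℤ,
      (u (n + 1) (m + 1) + 1) * (u n (m + 1) - 1)
        = θ * ((u (n + 1) m + 1) * (u n m - 1)))
    (hune : ∀ n m : ℤ, u n m ≠ -1) (hune' : ∀ n m : ℤ, u n m ≠ 1)
    (v : ℤ → ℤ → ℂ)
    (hv : ∀ n m : ℤ, v n m = θ * (u n m + 1) / (u n (m + 1) + 1)) :
    (∀ n m : ℤ, v (n + 1) m = (u n (m + 1) - 1) / (u n m - 1)) ∧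
    ((∀ n m : ℤ, v (n + 1) m * v n m ≠ θ) →
     (∀ n m : ℤ, v (n + 1) m ≠ 0) →
     (∀ n m : ℤ, v n (m + 1) ≠ 0) →
      ∀ n m : ℤ,
        (v (n + 1) (m + 1) - 1) * (v n m - θ)
          = θ * ((1 - (v (n + 1) m)⁻¹) * (1 - θ * (v n (m + 1))⁻¹))) := by
  have hp1 : ∀ n m : ℤ, u n m + 1 ≠ 0 := by
    intro n m h
    exact hune n m (by linear_combination h)
  have hθ0 : θ ≠ 0 := by
    intro h
    have := hθM
    rw [h, zero_pow (by omega : M ≠ 0)] at this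
    exact zero_ne_one this
  have hm1 : ∀ n m : ℤ, u n m - 1 ≠ 0 := fun n m => sub_ne_zero.mpr (hune' n m)
  have hi : ∀ n m : ℤ, v (n + 1) m = (u n (m + 1) - 1) / (u n m - 1) := by
    intro n m
    rw [hv]
    rw [div_eq_div_iff (hp1 _ _) (hm1 _ _)]
    linear_combination -heq n m
  refine ⟨hi, fun _ _ _ n m => ?_⟩
  rw [hi n (m + 1), hi n m, hv n m, hv n (m + 1)]
  have h1 := hp1 n m
  have h2 := hp1 n (m + 1)
  have h3 := hp1 n (m + 1 + 1)
  have h4 := hm1 n m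
  have h5 := hm1 n (m + 1)
  have h6 := hm1 n (m + 1 + 1)
  field_simp
  ring
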